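/- For every continuous map φ: Δ^{M-1} → ℝ^M there exists a sequence of Bézier simplices b^(i): Δ^{M-1} → ℝ^M such that sup_{t∈Δ^{M-1}} |φ(t) − b^(i)(t)| → 0 as i → ∞. -/

import Mathlib

/-- A Bézier simplex of degree `D` in `ℝ^M` with control points `p`. -/
noncomputable def bezierMap (M D : ℕ) (p : (Fin M → ℕ) → (Fin M → ℝ)) (t : Fin M → ℝ) :
    Fin M → ℝ :=
  ∑ d ∈ Finset.Nat.antidiagonalTuple M D,
    ((Nat.multinomial Finset.univ d : ℝ) * ∏ i, t i ^ d i) • p d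

open MvPolynomial Finset

/-- Degree elevation: multiply by `(∑ X)^(E-D)`, which is `1` on the simplex. -/
lemma bez_elevate {M : ℕ} {q : MvPolynomial (Fin M) ℝ} {D E : ℕ}
    (hq : q.IsHomogeneous D) (h : D ≤ E) :
    ∃ q' : MvPolynomial (Fin M) ℝ, q'.IsHomogeneous E ∧
      ∀ t ∈ stdSimplex ℝ (Fin M), eval t q' = eval t q := by
  refine ⟨q * (∑ j, X j) ^ (E - D), ?_, ?_⟩
  · have h1 : (∑ j : Fin M, (X j : MvPolynomial (Fin M) ℝ)).IsHomogeneous 1 :=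
      MvPolynomial.IsHomogeneous.sum _ _ _ fun i _ => isHomogeneous_X _ _
    have := hq.mul (h1.pow (E - D))
    rwa [one_mul, Nat.add_sub_cancel' h] at this
  · intro t ht
    rw [map_mul, map_pow, map_sum]
    simp only [eval_X]
    rw [ht.2, one_pow, mul_one]

/-- Every homogeneous polynomial of degree `D` evaluates as a sum over
`antidiagonalTuple M D`. -/
lemma bez_eval_homog {M D : ℕ} {q : MvPolynomial (Fin M) ℝ} (hq : q.IsHomogeneous D)
    (t : Fin M → ℝ) :
    eval t q = ∑ d ∈ Finset.Nat.antidiagonalTuple M D,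
      coeff (Finsupp.equivFunOnFinite.symm d) q * ∏ i, t i ^ d i := by
  rw [eval_eq']
  set e := (Finsupp.equivFunOnFinite : (Fin M →₀ ℕ) ≃ (Fin M → ℕ))
  have himg : q.support.image e ⊆ Finset.Nat.antidiagonalTuple M D := by
    intro d hd
    obtain ⟨d₀, hd₀, rfl⟩ := Finset.mem_image.mp hd
    rw [Finset.Nat.mem_antidiagonalTuple]
    have hdeg : d₀.degree = D := by
      rw [Finsupp.degree_eq_weight_one]
      exact hq (mem_support_iff.mp hd₀)
    rw [← hdeg, Finsupp.degree]
    exact (Finset.sum_subset (Finset.subset_univ _)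
      (fun i _ hi => Finsupp.notMem_support_iff.mp hi)).symm
  calc ∑ d ∈ q.support, coeff d q * ∏ i, t i ^ d i
      = ∑ d ∈ q.support.image e, coeff (e.symm d) q * ∏ i, t i ^ d i := by
        rw [Finset.sum_image (fun x _ y _ h => e.injective h)]
        refine Finset.sum_congr rfl fun d _ => ?_
        rw [e.symm_apply_apply]
        rfl
    _ = ∑ d ∈ Finset.Nat.antidiagonalTuple M D,
          coeff (e.symm d) q * ∏ i, t i ^ d i := by
        refine Finset.sum_subset himg fun d hd hnd => ?_
        have : coeff (e.symm d) q = 0 := by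
          by_contra hc
          exact hnd (Finset.mem_image.mpr ⟨e.symm d, mem_support_iff.mpr hc, e.apply_symm_apply d⟩)
        rw [this, zero_mul]

/-- Each element of the algebra generated by the coordinates is the restriction of a
homogeneous polynomial. -/
lemma bez_rep {M : ℕ} (g : C(stdSimplex ℝ (Fin M), ℝ))
    (hg : g ∈ Algebra.adjoin ℝ (Set.range fun j : Fin M =>
      (⟨fun x => (x : Fin M → ℝ) j, (continuous_apply j).comp continuous_subtype_val⟩ :
        C(stdSimplex ℝ (Fin M), ℝ)))) :
    ∃ (D : ℕ) (q : MvPolynomial (Fin M) ℝ), q.IsHomogeneous D ∧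
      ∀ x : stdSimplex ℝ (Fin M), g x = eval (x : Fin M → ℝ) q := by
  induction hg using Algebra.adjoin_induction with
  | mem f hf =>
    obtain ⟨j, rfl⟩ := hf
    exact ⟨1, X j, isHomogeneous_X _ _, fun x => by rw [eval_X]; rfl⟩
  | algebraMap r =>
    exact ⟨0, C r, isHomogeneous_C _ _, fun x => by simp⟩
  | add f₁ f₂ h₁ h₂ ih₁ ih₂ =>
    obtain ⟨D₁, q₁, hq₁, he₁⟩ := ih₁
    obtain ⟨D₂, q₂, hq₂, he₂⟩ := ih₂
    obtain ⟨q₁', hq₁', he₁'⟩ := bez_elevate hq₁ (le_max_left D₁ D₂)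
    obtain ⟨q₂', hq₂', he₂'⟩ := bez_elevate hq₂ (le_max_right D₁ D₂)
    refine ⟨max D₁ D₂, q₁' + q₂', hq₁'.add hq₂', fun x => ?_⟩
    rw [map_add, he₁' (x : Fin M → ℝ) x.2, he₂' (x : Fin M → ℝ) x.2, ← he₁ x, ← he₂ x]
    rfl
  | mul f₁ f₂ h₁ h₂ ih₁ ih₂ =>
    obtain ⟨D₁, q₁, hq₁, he₁⟩ := ih₁
    obtain ⟨D₂, q₂, hq₂, he₂⟩ := ih₂
    refine ⟨D₁ + D₂, q₁ * q₂, hq₁.mul hq₂, fun x => ?_⟩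
    rw [map_mul, ← he₁ x, ← he₂ x]
    rfl

/-- For every `ε > 0` there is a single Bézier simplex uniformly `ε`-close to `φ`. -/
lemma bez_key (M : ℕ) (φ : (Fin M → ℝ) → (Fin M → ℝ))
    (hφ : ContinuousOn φ (stdSimplex ℝ (Fin M))) :
    ∀ ε > (0 : ℝ), ∃ (D : ℕ) (p : (Fin M → ℕ) → (Fin M → ℝ)),
      ∀ t ∈ stdSimplex ℝ (Fin M), ‖φ t - bezierMap M D p t‖ < ε := by
  intro ε hε
  haveI : CompactSpace (stdSimplex ℝ (Fin M)) :=
    isCompact_iff_compactSpace.mp (isCompact_stdSimplex ℝ (Fin M))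
  set coords : Fin M → C(stdSimplex ℝ (Fin M), ℝ) := fun j =>
    ⟨fun x => (x : Fin M → ℝ) j, (continuous_apply j).comp continuous_subtype_val⟩
  set A : Subalgebra ℝ C(stdSimplex ℝ (Fin M), ℝ) := Algebra.adjoin ℝ (Set.range coords)
  have hsep : A.SeparatesPoints := by
    intro x y hxy
    have : (x : Fin M → ℝ) ≠ (y : Fin M → ℝ) := fun h => hxy (Subtype.ext h)
    obtain ⟨j, hj⟩ := Function.ne_iff.mp this
    exact ⟨coords j, ⟨coords j, Algebra.subset_adjoin ⟨j, rfl⟩, rfl⟩, hj⟩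
  -- for each coordinate, approximate by an element of A
  have hcont : ∀ j : Fin M, Continuous (fun x : stdSimplex ℝ (Fin M) => φ x j) :=
    fun j => (continuous_apply j).comp hφ.restrict
  have happrox : ∀ j : Fin M, ∃ g : A,
      ∀ x : stdSimplex ℝ (Fin M), ‖(g : C(stdSimplex ℝ (Fin M), ℝ)) x - φ x j‖ < ε :=
    fun j => ContinuousMap.exists_mem_subalgebra_near_continuous_of_separatesPoints
      A hsep _ (hcont j) ε hε
  choose g hgapp using happrox
  have hrep : ∀ j : Fin M, ∃ (D : ℕ) (q : MvPolynomial (Fin M) ℝ), q.IsHomogeneous D ∧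
      ∀ x : stdSimplex ℝ (Fin M),
        (g j : C(stdSimplex ℝ (Fin M), ℝ)) x = eval (x : Fin M → ℝ) q :=
    fun j => bez_rep _ (g j).2
  choose D q hq hqe using hrep
  set E := Finset.univ.sup D with hE
  have helev : ∀ j : Fin M, ∃ q' : MvPolynomial (Fin M) ℝ, q'.IsHomogeneous E ∧
      ∀ t ∈ stdSimplex ℝ (Fin M), eval t q' = eval t (q j) :=
    fun j => bez_elevate (hq j) (Finset.le_sup (Finset.mem_univ j))
  choose q' hq' hq'e using helev
  set p : (Fin M → ℕ) → (Fin M → ℝ) := fun d j =>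
    coeff (Finsupp.equivFunOnFinite.symm d) (q' j) / (Nat.multinomial Finset.univ d : ℝ) with hp
  refine ⟨E, p, fun t ht => ?_⟩
  have hbez : ∀ j : Fin M, bezierMap M E p t j = eval t (q' j) := by
    intro j
    rw [bez_eval_homog (hq' j) t]
    rw [hp]
    unfold bezierMap
    rw [Finset.sum_apply]
    refine Finset.sum_congr rfl fun d _ => ?_
    have hm : (Nat.multinomial Finset.univ d : ℝ) ≠ 0 :=
      Nat.cast_ne_zero.mpr (Nat.multinomial_pos _ _).ne'
    rw [Pi.smul_apply, smul_eq_mul]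
    field_simp
  refine (pi_norm_lt_iff (x := φ t - bezierMap M E p t) hε).mpr fun j => ?_
  rw [Pi.sub_apply, hbez j, hq'e j t ht, ← show (g j : C(stdSimplex ℝ (Fin M), ℝ)) ⟨t, ht⟩ = eval t (q j) from hqe j ⟨t, ht⟩]
  rw [norm_sub_rev]
  exact hgapp j ⟨t, ht⟩

/-- Every continuous map `φ : Δ^{M-1} → ℝ^M` is a uniform limit of Bézier simplices. -/
theorem bezier_simplex_approximation (M : ℕ) (φ : (Fin M → ℝ) → (Fin M → ℝ))
    (hφ : ContinuousOn φ (stdSimplex ℝ (Fin M))) :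
    ∃ (Dseq : ℕ → ℕ) (pseq : ℕ → (Fin M → ℕ) → (Fin M → ℝ)),
      ∀ ε > (0 : ℝ), ∃ N : ℕ, ∀ i ≥ N, ∀ t ∈ stdSimplex ℝ (Fin M),
        ‖φ t - bezierMap M (Dseq i) (pseq i) t‖ < ε := by
  have H : ∀ n : ℕ, ∃ (D : ℕ) (p : (Fin M → ℕ) → (Fin M → ℝ)),
      ∀ t ∈ stdSimplex ℝ (Fin M), ‖φ t - bezierMap M D p t‖ < 1 / (n + 1) :=
    fun n => bez_key M φ hφ _ (by positivity)
  choose Dseq pseq hseq using H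
  refine ⟨Dseq, pseq, fun ε hε => ?_⟩
  obtain ⟨N, hN⟩ := exists_nat_one_div_lt hε
  refine ⟨N, fun i hi t ht => ?_⟩
  have h1 : (1 : ℝ) / (i + 1) ≤ 1 / (N + 1) :=
    one_div_le_one_div_of_le (by positivity) (by exact_mod_cast Nat.succ_le_succ hi)
  exact (hseq i t ht).trans (lt_of_le_of_lt h1 hN)
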